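/- Let p ∈ (1,∞]. Suppose the delay system ẋ(t) = f(x_t) is forward complete on C⁰ and there exists σ ∈ KL such that ‖φ(t,x₀)‖_{C^{0,1−1/p}} ≤ σ(‖x₀‖_{C^{0,1−1/p}}, t) for all t ≥ 0 and all x₀ ∈ C^{0,1−1/p}. Then there exists ω ∈ KL such that ‖φ(t,x₀)‖_{W^{1,p}} ≤ ω(‖x₀‖_{W^{1,p}}, t) for all t ≥ 0 and all x₀ ∈ W^{1,p}. -/

import Mathlib

open Set MeasureTheory Filter Topology
open scoped ENNReal NNReal

noncomputable section

abbrev Vec (n : ℕ) := EuclideanSpace ℝ (Fin n)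

variable {n : ℕ}

/-- The segment `x_t` of a history `x : ℝ → ℝⁿ`, i.e. `x_t(s) = x(t+s)`
(only its values on `[-r,0]` are relevant). -/
def seg (r : ℝ) (x : ℝ → Vec n) (t : ℝ) : ℝ → Vec n := fun s => x (t + s)

/-- Sup norm over `[-r,0]`. -/
def supN (r : ℝ) (g : ℝ → Vec n) : ℝ := sSup ((fun s => ‖g s‖) '' Icc (-r) 0)

/-- Membership in `C⁰ = C([-r,0];ℝⁿ)`. -/
def MemC0 (r : ℝ) (g : ℝ → Vec n) : Prop := ContinuousOn g (Icc (-r) 0)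

/-- `f` vanishes at `0`, depends only on the values of its argument on `[-r,0]`,
and is Lipschitz on bounded subsets of `C⁰` with a nondecreasing (nonnegative)
modulus `L`. -/
def GoodRHS (r : ℝ) (f : (ℝ → Vec n) → Vec n) (L : ℝ → ℝ) : Prop :=
  f 0 = 0 ∧
  (∀ x y : ℝ → Vec n, EqOn x y (Icc (-r) 0) → f x = f y) ∧
  Monotone L ∧ (∀ s : ℝ, 0 ≤ L s) ∧
  ∀ R : ℝ, ∀ x y : ℝ → Vec n, MemC0 r x → MemC0 r y → supN r x ≤ R → supN r y ≤ R →
    ‖f x - f y‖ ≤ L R * supN r (x - y)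

/-- `x : ℝ → ℝⁿ` is a solution on `[-r, b)` (with `b ∈ (0,∞]` an extended
nonnegative real) of the delay system `ẋ(t) = f(x_t)` with initial condition `x0`:
it is continuous on `[-r,b)`, coincides with `x0` on `[-r,0]`, and satisfies the
integral equation `x(t) = x(0) + ∫₀ᵗ f(x_s) ds` on `[0,b)`. -/
def IsSol (r : ℝ) (f : (ℝ → Vec n) → Vec n) (x0 x : ℝ → Vec n) (b : ℝ≥0∞) : Prop :=
  ContinuousOn x {t : ℝ | -r ≤ t ∧ ENNReal.ofReal t < b} ∧
  EqOn x x0 (Icc (-r) 0) ∧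
  ∀ t : ℝ, 0 ≤ t → ENNReal.ofReal t < b → x t = x 0 + ∫ s in (0:ℝ)..t, f (seg r x s)

/-- Class `KL` functions `σ : [0,∞)×[0,∞) → [0,∞)`. -/
def ClassKL (σ : ℝ → ℝ → ℝ) : Prop :=
  (∀ s t : ℝ, 0 ≤ s → 0 ≤ t → 0 ≤ σ s t) ∧
  (∀ t : ℝ, 0 ≤ t →
    ContinuousOn (fun s => σ s t) (Ici 0) ∧ StrictMonoOn (fun s => σ s t) (Ici 0) ∧
      σ 0 t = 0) ∧
  (∀ s : ℝ, 0 ≤ s →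
    AntitoneOn (fun t => σ s t) (Ici 0) ∧ Tendsto (fun t => σ s t) atTop (nhds 0))

/-- Class `K∞` functions `a : [0,∞) → [0,∞)`. -/
def ClassKInf (a : ℝ → ℝ) : Prop :=
  (∀ s : ℝ, 0 ≤ s → 0 ≤ a s) ∧ ContinuousOn a (Ici 0) ∧ StrictMonoOn a (Ici 0) ∧
  a 0 = 0 ∧ Tendsto a atTop atTop

/-- The set of Hölder difference quotients `‖g t - g s‖ / |t-s|^α` over a set `S`. -/
def hRatios (α : ℝ) (S : Set ℝ) (g : ℝ → Vec n) : Set ℝ :=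
  {c | ∃ t ∈ S, ∃ s ∈ S, t ≠ s ∧ c = ‖g t - g s‖ / |t - s| ^ α}

/-- Membership in the Hölder space `C^{0,α}([-r,0])`. -/
def MemHol (r α : ℝ) (g : ℝ → Vec n) : Prop :=
  MemC0 r g ∧ BddAbove (hRatios α (Icc (-r) 0) g)

/-- The Hölder norm `max(‖g‖_∞, [g]_α)`. -/
def holderNorm (r α : ℝ) (g : ℝ → Vec n) : ℝ :=
  max (supN r g) (sSup (hRatios α (Icc (-r) 0) g))

/-- Membership in the Sobolev space `W^{1,p}([-r,0])`: `g` is absolutely continuous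
on `[-r,0]` (i.e. the integral of an integrable function `d`, which is then its a.e.
derivative) with `d ∈ L^p((-r,0))`. -/
def MemW (r : ℝ) (p : ℝ≥0∞) (g : ℝ → Vec n) : Prop :=
  ∃ d : ℝ → Vec n, IntegrableOn d (Icc (-r) 0) ∧
    eLpNorm d p (volume.restrict (Ioo (-r) 0)) < ⊤ ∧
    ∀ t ∈ Icc (-r) 0, g t = g (-r) + ∫ s in (-r)..t, d s

/-- The Sobolev norm `‖g‖_∞ + ‖ġ‖_p`; for an absolutely continuous `g` the a.e.
derivative coincides a.e. on `(-r,0)` with `deriv g`. -/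
def sobNorm (r : ℝ) (p : ℝ≥0∞) (g : ℝ → Vec n) : ℝ :=
  supN r g + (eLpNorm (deriv g) p (volume.restrict (Ioo (-r) 0))).toReal

/-- The Hölder exponent `1 - 1/p`, with the convention `1/∞ = 0`. -/
def hexp (p : ℝ≥0∞) : ℝ := 1 - (p.toReal)⁻¹


section Aux

section FTC

variable {E : Type*} [NormedAddCommGroup E] [NormedSpace ℝ E] [CompleteSpace E]

lemma aux_slope_avg {d : ℝ → E} (hd : Integrable d (volume : Measure ℝ)) (a : ℝ)
    {u v : ℝ} (huv : u < v) (c : E) :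
    ‖slope (fun w => ∫ s in a..w, d s) u v - c‖ ≤ ⨍ z in Icc u v, ‖d z - c‖ := by
  have hInt : ∀ p q : ℝ, IntervalIntegrable d volume p q := fun p q => hd.intervalIntegrable
  have hIntc : ∀ p q : ℝ, IntervalIntegrable (fun _ => c) volume p q := fun p q =>
    intervalIntegrable_const
  have hF : (∫ s in a..v, d s) - ∫ s in a..u, d s = ∫ s in u..v, d s :=
    intervalIntegral.integral_interval_sub_left (hInt a v) (hInt a u)
  have hvu : (0:ℝ) < v - u := by linarith
  have e1 : slope (fun w => ∫ s in a..w, d s) u v - c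
      = (v - u)⁻¹ • (∫ s in u..v, (d s - c)) := by
    rw [intervalIntegral.integral_sub (hInt u v) (hIntc u v),
      intervalIntegral.integral_const, slope, vsub_eq_sub, hF, smul_sub, smul_smul,
      inv_mul_cancel₀ hvu.ne', one_smul]
  rw [e1, norm_smul, Real.norm_eq_abs, abs_of_pos (inv_pos.2 hvu)]
  have e2 : ‖∫ s in u..v, (d s - c)‖ ≤ ∫ s in u..v, ‖d s - c‖ :=
    intervalIntegral.norm_integral_le_integral_norm huv.le
  have e3 : ∫ s in u..v, ‖d s - c‖ = ∫ z in Icc u v, ‖d z - c‖ := by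
    rw [intervalIntegral.integral_of_le huv.le, integral_Icc_eq_integral_Ioc]
  have e4 : ⨍ z in Icc u v, ‖d z - c‖ = (v - u)⁻¹ * ∫ z in Icc u v, ‖d z - c‖ := by
    rw [setAverage_eq, Real.volume_real_Icc_of_le huv.le, smul_eq_mul]
  rw [e4]
  exact mul_le_mul_of_nonneg_left (e2.trans e3.le) (inv_pos.2 hvu).le

lemma aux_ae_hasDerivAt_primitive {d : ℝ → E} (hd : Integrable d (volume : Measure ℝ)) (a : ℝ) :
    ∀ᵐ t : ℝ, HasDerivAt (fun w => ∫ s in a..w, d s) (d t) t := by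
  have hloc : LocallyIntegrable (fun z => d z) volume := hd.locallyIntegrable
  filter_upwards [(IsUnifLocDoublingMeasure.vitaliFamily (volume : Measure ℝ)
    1).ae_tendsto_average_norm_sub hloc] with x hx
  set F : ℝ → E := fun w => ∫ s in a..w, d s with hFdef
  have hR : Tendsto (fun y => ‖slope F x y - d x‖) (𝓝[>] x) (𝓝 0) := by
    apply squeeze_zero' (Eventually.of_forall fun y => norm_nonneg _)
      _ (hx.comp (Real.tendsto_Icc_vitaliFamily_right x))
    filter_upwards [self_mem_nhdsWithin]
    rintro y (hy : x < y)
    exact aux_slope_avg hd a hy (d x)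
  have hL : Tendsto (fun y => ‖slope F x y - d x‖) (𝓝[<] x) (𝓝 0) := by
    apply squeeze_zero' (Eventually.of_forall fun y => norm_nonneg _)
      _ (hx.comp (Real.tendsto_Icc_vitaliFamily_left x))
    filter_upwards [self_mem_nhdsWithin]
    rintro y (hy : y < x)
    rw [slope_comm]
    exact aux_slope_avg hd a hy (d x)
  rw [hasDerivAt_iff_tendsto_slope, ← nhdsLT_sup_nhdsGT, tendsto_sup]
  constructor
  · exact tendsto_iff_norm_sub_tendsto_zero.2 hL
  · exact tendsto_iff_norm_sub_tendsto_zero.2 hR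

end FTC

section SupN


lemma aux_supN_nonneg (r : ℝ) (g : ℝ → Vec n) : 0 ≤ supN r g := by
  apply Real.sSup_nonneg
  rintro y ⟨s, _, rfl⟩
  exact norm_nonneg _

lemma aux_supN_le {r C : ℝ} (hr : 0 < r) {g : ℝ → Vec n}
    (h : ∀ s ∈ Icc (-r) 0, ‖g s‖ ≤ C) : supN r g ≤ C := by
  have h0 : (0:ℝ) ∈ Icc (-r) 0 := ⟨by linarith, le_refl _⟩
  refine Real.sSup_le ?_ ((norm_nonneg _).trans (h 0 h0))
  rintro y ⟨s, hs, rfl⟩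
  exact h s hs

lemma aux_le_supN {r : ℝ} {g : ℝ → Vec n} (hg : MemC0 r g) {s : ℝ}
    (hs : s ∈ Icc (-r) 0) : ‖g s‖ ≤ supN r g :=
  le_csSup (isCompact_Icc.bddAbove_image (continuous_norm.comp_continuousOn hg)) ⟨s, hs, rfl⟩

lemma aux_supN_zero {r : ℝ} (hr : 0 < r) : supN r (0 : ℝ → Vec n) = 0 :=
  le_antisymm (aux_supN_le hr (by simp)) (aux_supN_nonneg r 0)

end SupN

section Split

lemma aux_eLpNorm_split {f : ℝ → Vec n} (hf : StronglyMeasurable f) {a b c : ℝ}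
    (hab : a ≤ b) (hbc : b ≤ c) {p : ℝ≥0∞} (hp : 1 ≤ p) :
    eLpNorm f p (volume.restrict (Ioo a c)) ≤
      eLpNorm f p (volume.restrict (Ioo a b)) + eLpNorm f p (volume.restrict (Ioo b c)) := by
  have hsub : Ioo a c \ {b} ⊆ Ioo a b ∪ Ioo b c := by
    rintro y ⟨⟨h1, h2⟩, h3⟩
    have hyb : y ≠ b := fun h => h3 (by simp [h])
    rcases hyb.lt_or_gt with h | h
    · exact Or.inl ⟨h1, h⟩
    · exact Or.inr ⟨h, h2⟩
  have hcong : volume.restrict (Ioo a c) = volume.restrict (Ioo a c \ {b}) := by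
    refine Measure.restrict_congr_set ?_
    have h0 := (diff_ae_eq_self (μ := volume) (s := Ioo a c) (t := {b})).2
      (measure_mono_null inter_subset_right Real.volume_singleton)
    exact h0.symm
  rw [hcong]
  have h1 : eLpNorm f p (volume.restrict (Ioo a c \ {b})) ≤
      eLpNorm f p (volume.restrict (Ioo a b ∪ Ioo b c)) :=
    eLpNorm_mono_measure f (Measure.restrict_mono hsub le_rfl)
  refine h1.trans ?_
  have hdisj : ∀ y ∈ Ioo a b ∪ Ioo b c,
      f y = (Ioo a b).indicator f y + (Ioo b c).indicator f y := by
    rintro y (hy | hy)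
    · rw [indicator_of_mem hy, indicator_of_notMem (fun h => absurd hy.2 (not_lt.2 h.1.le)),
        add_zero]
    · rw [indicator_of_notMem (fun h => absurd hy.1 (not_lt.2 h.2.le)), indicator_of_mem hy,
        zero_add]
  have hae : f =ᵐ[volume.restrict (Ioo a b ∪ Ioo b c)]
      fun y => (Ioo a b).indicator f y + (Ioo b c).indicator f y := by
    filter_upwards [ae_restrict_mem ((measurableSet_Ioo).union measurableSet_Ioo)] with y hy
    exact hdisj y hy
  rw [eLpNorm_congr_ae hae]
  have hm1 : AEStronglyMeasurable ((Ioo a b).indicator f)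
      (volume.restrict (Ioo a b ∪ Ioo b c)) :=
    (hf.indicator measurableSet_Ioo).aestronglyMeasurable
  have hm2 : AEStronglyMeasurable ((Ioo b c).indicator f)
      (volume.restrict (Ioo a b ∪ Ioo b c)) :=
    (hf.indicator measurableSet_Ioo).aestronglyMeasurable
  refine (eLpNorm_add_le hm1 hm2 hp).trans ?_
  gcongr
  · calc eLpNorm ((Ioo a b).indicator f) p (volume.restrict (Ioo a b ∪ Ioo b c))
        ≤ eLpNorm ((Ioo a b).indicator f) p volume :=
          eLpNorm_mono_measure _ Measure.restrict_le_self
      _ = eLpNorm f p (volume.restrict (Ioo a b)) :=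
          eLpNorm_indicator_eq_eLpNorm_restrict measurableSet_Ioo
  · calc eLpNorm ((Ioo b c).indicator f) p (volume.restrict (Ioo a b ∪ Ioo b c))
        ≤ eLpNorm ((Ioo b c).indicator f) p volume :=
          eLpNorm_mono_measure _ Measure.restrict_le_self
      _ = eLpNorm f p (volume.restrict (Ioo b c)) :=
          eLpNorm_indicator_eq_eLpNorm_restrict measurableSet_Ioo

end Split

lemma aux_hexp_nonneg {p : ℝ≥0∞} (hp : 1 ≤ p) : 0 ≤ hexp p := by
  by_cases h : p = ⊤
  · simp [hexp, h]
  · have h1 : (1:ℝ) ≤ p.toReal := by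
      rw [← ENNReal.toReal_one]
      exact ENNReal.toReal_mono h hp
    have := inv_le_one_of_one_le₀ h1
    simp only [hexp, sub_nonneg]
    exact this

lemma aux_holder {r : ℝ} (hr : 0 < r) {p : ℝ≥0∞} (hp : 1 ≤ p) {d : ℝ → Vec n}
    (hd : IntegrableOn d (Icc (-r) 0)) (hD : eLpNorm d p (volume.restrict (Ioo (-r) 0)) ≠ ⊤)
    {s t : ℝ} (hs : -r ≤ s) (ht : t ≤ 0) (hst : s ≤ t) :
    ‖∫ u in s..t, d u‖ ≤
      (eLpNorm d p (volume.restrict (Ioo (-r) 0))).toReal * (t - s) ^ (hexp p) := by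
  set D := eLpNorm d p (volume.restrict (Ioo (-r) 0)) with hDdef
  have hIcc : Ioc s t ⊆ Ioc (-r) 0 := Ioc_subset_Ioc hs ht
  have hIntst : IntegrableOn d (Ioc s t) volume := hd.mono_set (hIcc.trans Ioc_subset_Icc_self)
  have hmeas : AEStronglyMeasurable d (volume.restrict (Ioc s t)) :=
    hd.aestronglyMeasurable.mono_measure
      (Measure.restrict_mono (hIcc.trans Ioc_subset_Icc_self) le_rfl)
  have step1 : ‖∫ u in s..t, d u‖ ≤ ∫ u in Ioc s t, ‖d u‖ := by
    rw [← intervalIntegral.integral_of_le hst]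
    exact intervalIntegral.norm_integral_le_integral_norm hst
  have step3 : ENNReal.ofReal (∫ u in Ioc s t, ‖d u‖) = eLpNorm d 1 (volume.restrict (Ioc s t)) := by
    rw [eLpNorm_one_eq_lintegral_enorm]
    exact ofReal_integral_norm_eq_lintegral_enorm hIntst
  have step4 : eLpNorm d 1 (volume.restrict (Ioc s t)) ≤
      eLpNorm d p (volume.restrict (Ioc s t)) * (ENNReal.ofReal (t - s)) ^ (hexp p) := by
    have h := eLpNorm_le_eLpNorm_mul_rpow_measure_univ hp hmeas
    rw [Measure.restrict_apply_univ, Real.volume_Ioc] at h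
    have hx : 1 / (1:ℝ≥0∞).toReal - 1 / p.toReal = hexp p := by
      simp [hexp, one_div]
    rwa [hx] at h
  have step5 : eLpNorm d p (volume.restrict (Ioc s t)) ≤ D := by
    have h1 : eLpNorm d p (volume.restrict (Ioc s t)) ≤
        eLpNorm d p (volume.restrict (Ioc (-r) 0)) :=
      eLpNorm_mono_measure d (Measure.restrict_mono hIcc le_rfl)
    rwa [show volume.restrict (Ioc (-r) (0:ℝ)) = volume.restrict (Ioo (-r) (0:ℝ)) from
      (Measure.restrict_congr_set Ioo_ae_eq_Ioc).symm] at h1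
  have key : ENNReal.ofReal (∫ u in Ioc s t, ‖d u‖) ≤ D * (ENNReal.ofReal (t - s)) ^ (hexp p) := by
    rw [step3]
    exact step4.trans (by gcongr)
  have hfin : D * (ENNReal.ofReal (t - s)) ^ (hexp p) ≠ ⊤ :=
    ENNReal.mul_ne_top hD (ENNReal.rpow_ne_top_of_nonneg (aux_hexp_nonneg hp) ENNReal.ofReal_ne_top)
  have h2 := ENNReal.toReal_mono hfin key
  rw [ENNReal.toReal_ofReal (integral_nonneg (fun u => norm_nonneg _))] at h2
  refine step1.trans (h2.trans ?_)
  rw [ENNReal.toReal_mul, ← ENNReal.toReal_rpow, ENNReal.toReal_ofReal (by linarith)]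

section L1
variable {L : ℝ → ℝ}

def auxL1 (L : ℝ → ℝ) : ℝ → ℝ := fun s => ∫ u in s..(s+1), L u

lemma auxL1_cont (hL : Monotone L) : Continuous (auxL1 L) := by
  have he : auxL1 L = fun s => (∫ u in (0:ℝ)..(s+1), L u) - ∫ u in (0:ℝ)..s, L u :=
    funext fun s =>
      (intervalIntegral.integral_interval_sub_left (hL.intervalIntegrable) (hL.intervalIntegrable)).symm
  rw [he]
  have h := intervalIntegral.continuous_primitive (μ := volume) (fun a b => hL.intervalIntegrable) 0
  exact (h.comp (continuous_id.add continuous_const)).sub h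

lemma auxL1_mono (hL : Monotone L) : Monotone (auxL1 L) := by
  intro a b hab
  have h1 : (∫ u in a..(a+1), L u) ≤ ∫ u in a..(a+1), L (u + (b - a)) := by
    apply intervalIntegral.integral_mono_on (by linarith) (hL.intervalIntegrable)
      ((hL.comp (monotone_id.add_const _)).intervalIntegrable)
    intro u _
    exact hL (le_add_of_nonneg_right (by linarith))
  have h2 : (∫ u in a..(a+1), L (u + (b - a))) = ∫ u in b..(b+1), L u := by
    have h := intervalIntegral.integral_comp_add_right (a := a) (b := a + 1) L (b - a)
    rw [show a + (b - a) = b by ring, show a + 1 + (b - a) = b + 1 by ring] at h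
    exact h
  calc auxL1 L a ≤ ∫ u in a..(a+1), L (u + (b - a)) := h1
    _ = auxL1 L b := h2

lemma auxL1_ge (hL : Monotone L) (s : ℝ) : L s ≤ auxL1 L s := by
  have h : (∫ _ in s..(s+1), L s) ≤ ∫ u in s..(s+1), L u := by
    apply intervalIntegral.integral_mono_on (by linarith) intervalIntegrable_const
      (hL.intervalIntegrable)
    intro u hu
    exact hL hu.1
  simpa [auxL1] using h

lemma auxL1_nonneg (hL : Monotone L) (hL0 : ∀ s, 0 ≤ L s) (s : ℝ) : 0 ≤ auxL1 L s :=
  le_trans (hL0 s) (auxL1_ge hL s)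

end L1


section Sol

variable {r : ℝ} {f : (ℝ → Vec n) → Vec n} {L : ℝ → ℝ} {x : ℝ → Vec n}

lemma aux_seg_memC0 (hx : ContinuousOn x (Ici (-r))) {t : ℝ} (ht : 0 ≤ t) :
    MemC0 r (seg r x t) := by
  apply hx.comp ((continuous_const.add continuous_id).continuousOn)
  intro s hs
  exact mem_Ici.2 (by show -r ≤ t + s; linarith [hs.1])

lemma aux_g_cont (hr : 0 < r) (hf : GoodRHS r f L) (hx : ContinuousOn x (Ici (-r))) :
    ContinuousOn (fun u => f (seg r x u)) (Ici 0) := by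
  obtain ⟨hf0, hdep, hLmono, hL0, hLip⟩ := hf
  rw [Metric.continuousOn_iff]
  intro u₀ hu₀ ε hε
  rw [mem_Ici] at hu₀
  set K := Icc (-r) (u₀ + 1) with hKdef
  have hK : IsCompact K := isCompact_Icc
  have hxK : ContinuousOn x K := hx.mono (fun w hw => mem_Ici.2 hw.1)
  obtain ⟨R₀, hR₀⟩ := hK.bddAbove_image (continuous_norm.comp_continuousOn hxK)
  have hR₀b : ∀ w ∈ K, ‖x w‖ ≤ R₀ := fun w hw => hR₀ (mem_image_of_mem _ hw)
  have hUC := hK.uniformContinuousOn_of_continuous hxK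
  rw [Metric.uniformContinuousOn_iff] at hUC
  have hLR0 : 0 ≤ L R₀ := hL0 R₀
  set ε' := ε / (2 * (L R₀ + 1)) with hε'def
  have hε' : 0 < ε' := div_pos hε (by linarith)
  obtain ⟨δ₀, hδ₀, hδ⟩ := hUC ε' hε'
  refine ⟨min δ₀ 1, lt_min hδ₀ one_pos, ?_⟩
  intro u hu hdist
  rw [mem_Ici] at hu
  rw [Real.dist_eq, lt_min_iff] at hdist
  have hu1 : u ≤ u₀ + 1 := by
    rcases abs_sub_lt_iff.1 hdist.2 with ⟨h1, _⟩
    linarith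
  have hmem : ∀ w, 0 ≤ w → w ≤ u₀ + 1 → ∀ s ∈ Icc (-r) 0, w + s ∈ K := by
    intro w hw hw1 s hs
    exact ⟨by linarith [hs.1], by linarith [hs.2]⟩
  have hsupb : ∀ w, 0 ≤ w → w ≤ u₀ + 1 → supN r (seg r x w) ≤ R₀ := fun w hw hw1 =>
    aux_supN_le hr (fun s hs => hR₀b _ (hmem w hw hw1 s hs))
  have hsegu : MemC0 r (seg r x u) := aux_seg_memC0 hx hu
  have hsegu₀ : MemC0 r (seg r x u₀) := aux_seg_memC0 hx hu₀
  have hdiff : supN r (seg r x u - seg r x u₀) ≤ ε' := by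
    apply aux_supN_le hr
    intro s hs
    have h1 : (seg r x u - seg r x u₀) s = x (u + s) - x (u₀ + s) := rfl
    rw [h1, ← dist_eq_norm]
    refine (hδ (u + s) (hmem u hu hu1 s hs) (u₀ + s) (hmem u₀ hu₀ (by linarith) s hs) ?_).le
    rw [Real.dist_eq, show u + s - (u₀ + s) = u - u₀ by ring]
    exact hdist.1
  calc dist (f (seg r x u)) (f (seg r x u₀)) = ‖f (seg r x u) - f (seg r x u₀)‖ :=
        dist_eq_norm _ _
    _ ≤ L R₀ * supN r (seg r x u - seg r x u₀) :=
        hLip R₀ _ _ hsegu hsegu₀ (hsupb u hu hu1) (hsupb u₀ hu₀ (by linarith))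
    _ ≤ L R₀ * ε' := mul_le_mul_of_nonneg_left hdiff hLR0
    _ < ε := by
        have h1 : (L R₀ + 1) * ε' = ε / 2 := by
          rw [hε'def]
          field_simp
        have h2 : L R₀ * ε' ≤ (L R₀ + 1) * ε' := mul_le_mul_of_nonneg_right (by linarith) hε'.le
        linarith

end Sol

section Sol2

variable {r : ℝ} {f : (ℝ → Vec n) → Vec n} {L : ℝ → ℝ} {x0 x : ℝ → Vec n}

lemma aux_sol_contOn (hsol : IsSol r f x0 x ⊤) : ContinuousOn x (Ici (-r)) := by
  have hset : {t : ℝ | -r ≤ t ∧ ENNReal.ofReal t < ⊤} = Ici (-r) := by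
    ext w
    simp [ENNReal.ofReal_lt_top]
  have hc := hsol.1
  rwa [hset] at hc

lemma aux_sol_deriv (hr : 0 < r) (hf : GoodRHS r f L) (hsol : IsSol r f x0 x ⊤) :
    ∀ u : ℝ, 0 < u → HasDerivAt x (f (seg r x u)) u := by
  have hx : ContinuousOn x (Ici (-r)) := aux_sol_contOn hsol
  have hg : ContinuousOn (fun u => f (seg r x u)) (Ici 0) := aux_g_cont hr hf hx
  intro u hu
  have hgi : IntervalIntegrable (fun w => f (seg r x w)) volume 0 u := by
    apply ContinuousOn.intervalIntegrable
    apply hg.mono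
    rw [uIcc_of_le hu.le]
    exact fun w hw => hw.1
  have hmeasAt : StronglyMeasurableAtFilter (fun w => f (seg r x w)) (𝓝 u) volume :=
    ContinuousOn.stronglyMeasurableAtFilter isOpen_Ioi (hg.mono Ioi_subset_Ici_self) u hu
  have hcontAt : ContinuousAt (fun w => f (seg r x w)) u :=
    (hg.mono Ioi_subset_Ici_self).continuousAt (Ioi_mem_nhds hu)
  have hG : HasDerivAt (fun w => x 0 + ∫ s in (0:ℝ)..w, f (seg r x s)) (f (seg r x u)) u :=
    (intervalIntegral.integral_hasDerivAt_right hgi hmeasAt hcontAt).const_add (x 0)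
  apply hG.congr_of_eventuallyEq
  filter_upwards [Ioi_mem_nhds hu] with w hw
  exact hsol.2.2 w (le_of_lt hw) (by simp)

end Sol2

end Aux

set_option maxHeartbeats 1600000 in
/-- UGAS in `C^{0,1-1/p}` implies UGAS in `W^{1,p}` for
`p ∈ (1,∞]`, for a forward-complete system on `C⁰`. -/
theorem stmt7 (n : ℕ) (hn : 1 ≤ n) (r : ℝ) (hr : 0 < r)
    (f : (ℝ → Vec n) → Vec n) (L : ℝ → ℝ) (hf : GoodRHS r f L)
    (p : ℝ≥0∞) (hp : 1 < p)
    (hFC : ∀ x0 : ℝ → Vec n, MemC0 r x0 → ∃ x : ℝ → Vec n, IsSol r f x0 x ⊤)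
    (σ : ℝ → ℝ → ℝ) (hσ : ClassKL σ)
    (hUG : ∀ x0 x : ℝ → Vec n, MemHol r (hexp p) x0 → IsSol r f x0 x ⊤ →
      ∀ t : ℝ, 0 ≤ t → holderNorm r (hexp p) (seg r x t) ≤ σ (holderNorm r (hexp p) x0) t) :
    ∃ ω : ℝ → ℝ → ℝ, ClassKL ω ∧ ∀ x0 x : ℝ → Vec n, MemW r p x0 → IsSol r f x0 x ⊤ →
      ∀ t : ℝ, 0 ≤ t → sobNorm r p (seg r x t) ≤ ω (sobNorm r p x0) t := by
  classical
  obtain ⟨hσ0, hσs, hσt⟩ := hσ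
  have hf0 := hf.1
  have hLmono := hf.2.2.1
  have hL0 := hf.2.2.2.1
  have hLip := hf.2.2.2.2
  have hp1 : (1:ℝ≥0∞) ≤ p := hp.le
  set κ : ℝ := max 1 r with hκdef
  have hκ1 : (1:ℝ) ≤ κ := le_max_left _ _
  have hκ0 : (0:ℝ) ≤ κ := by linarith
  have hrκ : r ≤ κ := le_max_right _ _
  have he0 : (0:ℝ) ≤ p.toReal⁻¹ := inv_nonneg.2 ENNReal.toReal_nonneg
  have he1 : p.toReal⁻¹ ≤ 1 := by
    by_cases h : p = ⊤
    · simp [h]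
    · have h1 : (1:ℝ) ≤ p.toReal := by
        rw [← ENNReal.toReal_one]
        exact ENNReal.toReal_mono h hp1
      exact inv_le_one_of_one_le₀ h1
  set A : ℝ → ℝ := fun s => auxL1 L (σ s 0) + 1 with hAdef
  have hAnn : ∀ s, 0 ≤ A s := fun s =>
    add_nonneg (auxL1_nonneg hLmono hL0 _) zero_le_one
  have hσ0mono : MonotoneOn (fun s => σ s 0) (Ici 0) := (hσs 0 le_rfl).2.1.monotoneOn
  have hAmono : MonotoneOn A (Ici 0) := fun a ha b hb hab =>
    add_le_add (auxL1_mono hLmono (hσ0mono ha hb hab)) le_rfl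
  have hAcont : ContinuousOn A (Ici 0) :=
    ((auxL1_cont hLmono).comp_continuousOn (hσs 0 le_rfl).1).add continuousOn_const
  refine ⟨fun s t => σ s t + κ * (A s * σ s (max 0 (t - r))) +
    s * (if t < r then 1 else 0), ⟨?_, ?_, ?_⟩, ?_⟩
  · -- nonnegativity
    intro s t hs ht
    dsimp only
    have h1 : 0 ≤ σ s t := hσ0 s t hs ht
    have h2 : 0 ≤ σ s (max 0 (t - r)) := hσ0 s _ hs (le_max_left _ _)
    have h3 : (0:ℝ) ≤ if t < r then (1:ℝ) else 0 := by positivity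
    have h4 : 0 ≤ κ * (A s * σ s (max 0 (t - r))) :=
      mul_nonneg hκ0 (mul_nonneg (hAnn s) h2)
    have h5 : 0 ≤ s * (if t < r then (1:ℝ) else 0) := mul_nonneg hs h3
    linarith
  · -- s-regularity
    intro t ht
    refine ⟨?_, ?_, ?_⟩ <;> dsimp only
    · refine (((hσs t ht).1.add ?_).add ?_)
      · exact continuousOn_const.mul ((hAcont.mul (hσs _ (le_max_left _ _)).1))
      · exact continuousOn_id.mul continuousOn_const
    · intro a ha b hb hab
      have h1 : σ a t < σ b t := (hσs t ht).2.1 ha hb hab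
      have hm := ((hσs _ (le_max_left 0 (t - r))).2.1).monotoneOn
      have h2 : κ * (A a * σ a (max 0 (t - r))) ≤ κ * (A b * σ b (max 0 (t - r))) := by
        apply mul_le_mul_of_nonneg_left _ hκ0
        exact mul_le_mul (hAmono ha hb hab.le) (hm ha hb hab.le)
          (hσ0 a _ ha (le_max_left _ _)) (hAnn b)
      have h3 : a * (if t < r then (1:ℝ) else 0) ≤ b * (if t < r then (1:ℝ) else 0) :=
        mul_le_mul_of_nonneg_right hab.le (by positivity)
      exact add_lt_add_of_lt_of_le (add_lt_add_of_lt_of_le h1 h2) h3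
    · simp [(hσs t ht).2.2, (hσs _ (le_max_left 0 (t - r))).2.2]
  · -- t-regularity
    intro s hs
    dsimp only
    constructor
    · intro t1 h1 t2 h2 h12
      have ha1 : σ s t2 ≤ σ s t1 := (hσt s hs).1 h1 h2 h12
      have ha2 : σ s (max 0 (t2 - r)) ≤ σ s (max 0 (t1 - r)) :=
        (hσt s hs).1 (mem_Ici.2 (le_max_left _ _)) (mem_Ici.2 (le_max_left _ _))
          (max_le_max le_rfl (sub_le_sub_right h12 r))
      have ha3 : (if t2 < r then (1:ℝ) else 0) ≤ (if t1 < r then (1:ℝ) else 0) := by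
        split_ifs with hx1 hx2
        · exact le_refl _
        · exact absurd (lt_of_le_of_lt h12 hx1) hx2
        · exact zero_le_one
        · exact le_refl _
      have hb2 : κ * (A s * σ s (max 0 (t2 - r))) ≤ κ * (A s * σ s (max 0 (t1 - r))) :=
        mul_le_mul_of_nonneg_left (mul_le_mul_of_nonneg_left ha2 (hAnn s)) hκ0
      have hb3 : s * (if t2 < r then (1:ℝ) else 0) ≤ s * (if t1 < r then (1:ℝ) else 0) :=
        mul_le_mul_of_nonneg_left ha3 hs
      exact add_le_add (add_le_add ha1 hb2) hb3
    · have T1 : Tendsto (fun t => σ s t) atTop (𝓝 0) := (hσt s hs).2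
      have Tin : Tendsto (fun t : ℝ => max 0 (t - r)) atTop atTop := by
        apply tendsto_atTop_mono (fun t => le_max_right 0 (t - r))
        simpa [sub_eq_add_neg] using tendsto_atTop_add_const_right atTop (-r) tendsto_id
      have T2 : Tendsto (fun t => σ s (max 0 (t - r))) atTop (𝓝 0) := T1.comp Tin
      have T2' : Tendsto (fun t => κ * (A s * σ s (max 0 (t - r)))) atTop (𝓝 0) := by
        have := (T2.const_mul (A s)).const_mul κ
        simpa using this
      have T3 : Tendsto (fun t => s * (if t < r then (1:ℝ) else 0)) atTop (𝓝 0) := by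
        apply Tendsto.congr' _ (tendsto_const_nhds (x := (0:ℝ)))
        filter_upwards [eventually_ge_atTop r] with t htr
        rw [if_neg (not_lt.2 htr), mul_zero]
      have := (T1.add T2').add T3
      simpa using this
  · -- main estimate
    intro x0 x hW hsol t ht
    obtain ⟨d, hdInt, hdLp, hdRep⟩ := hW
    have hx : ContinuousOn x (Ici (-r)) := aux_sol_contOn hsol
    have heqx0 : EqOn x x0 (Icc (-r) 0) := hsol.2.1
    have hdiv : ∀ u v : ℝ, u ∈ Icc (-r) (0:ℝ) → v ∈ Icc (-r) (0:ℝ) →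
        IntervalIntegrable d volume u v := by
      intro u v hu hv
      constructor
      · exact hdInt.mono_set (fun z hz => ⟨le_trans hu.1 hz.1.le, hz.2.trans hv.2⟩)
      · exact hdInt.mono_set (fun z hz => ⟨le_trans hv.1 hz.1.le, hz.2.trans hu.2⟩)
    -- a.e. identification of deriv x0 with d on Ioo (-r) 0
    have hmr : -r ∈ Icc (-r) (0:ℝ) := ⟨le_refl _, by linarith⟩
    have hae : ∀ᵐ u ∂(volume.restrict (Ioo (-r) (0:ℝ))), deriv x0 u = d u := by
      have hdd : Integrable ((Icc (-r) (0:ℝ)).indicator d) volume :=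
        hdInt.integrable_indicator measurableSet_Icc
      have h1 : ∀ᵐ u ∂(volume.restrict (Ioo (-r) (0:ℝ))),
          HasDerivAt (fun w => ∫ s in (-r)..w, (Icc (-r) (0:ℝ)).indicator d s)
            ((Icc (-r) (0:ℝ)).indicator d u) u :=
        ae_restrict_of_ae (aux_ae_hasDerivAt_primitive hdd (-r))
      filter_upwards [h1, ae_restrict_mem measurableSet_Ioo] with u hu humem
      have hnb : Ioo (-r) (0:ℝ) ∈ 𝓝 u := isOpen_Ioo.mem_nhds humem
      have hev : (fun w => x0 (-r) + ∫ s in (-r)..w, (Icc (-r) (0:ℝ)).indicator d s)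
          =ᶠ[𝓝 u] x0 := by
        filter_upwards [hnb] with w hw
        have hw' : w ∈ Icc (-r) (0:ℝ) := Ioo_subset_Icc_self hw
        have hcongr : (∫ s in (-r)..w, (Icc (-r) (0:ℝ)).indicator d s) = ∫ s in (-r)..w, d s := by
          apply intervalIntegral.integral_congr
          intro z hz
          rw [uIcc_of_le hw'.1] at hz
          have hzmem : z ∈ Icc (-r) (0:ℝ) := ⟨hz.1, hz.2.trans hw'.2⟩
          exact indicator_of_mem hzmem d
        rw [hcongr, ← hdRep w hw']
      have hD : HasDerivAt x0 ((Icc (-r) (0:ℝ)).indicator d u) u :=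
        (hu.const_add (x0 (-r))).congr_of_eventuallyEq hev.symm
      rw [hD.deriv, indicator_of_mem (Ioo_subset_Icc_self humem)]
    set D := eLpNorm (deriv x0) p (volume.restrict (Ioo (-r) 0)) with hDdef
    have hDeq : D = eLpNorm d p (volume.restrict (Ioo (-r) 0)) := eLpNorm_congr_ae hae
    have hDfin : D ≠ ⊤ := by rw [hDeq]; exact hdLp.ne
    -- continuity of x0
    have hx0C : MemC0 r x0 := by
      have hco := intervalIntegral.continuousOn_primitive (μ := volume) (a := -r) (b := 0) hdInt
      apply ((continuousOn_const (c := x0 (-r))).add hco).congr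
      intro u hu
      rw [hdRep u hu, intervalIntegral.integral_of_le hu.1]
      rfl
    -- Hölder seminorm bound
    have hkey : ∀ a b : ℝ, a ∈ Icc (-r) 0 → b ∈ Icc (-r) 0 → b < a →
        ‖x0 a - x0 b‖ / |a - b| ^ hexp p ≤ D.toReal := by
      intro a b ha hb hlt
      have hx0diff : x0 a - x0 b = ∫ u in b..a, d u := by
        rw [hdRep a ha, hdRep b hb, add_sub_add_left_eq_sub]
        exact intervalIntegral.integral_interval_sub_left (hdiv _ _ hmr ha) (hdiv _ _ hmr hb)
      have hhol := aux_holder hr hp1 hdInt hdLp.ne hb.1 ha.2 hlt.le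
      rw [hx0diff, abs_of_pos (sub_pos.2 hlt),
        div_le_iff₀ (Real.rpow_pos_of_pos (sub_pos.2 hlt) _), hDeq]
      exact hhol
    have hrat : ∀ c ∈ hRatios (hexp p) (Icc (-r) 0) x0, c ≤ D.toReal := by
      rintro c ⟨a, ha, b, hb, hne, rfl⟩
      rcases hne.lt_or_gt with h | h
      · rw [norm_sub_rev, abs_sub_comm]
        exact hkey b a hb ha h
      · exact hkey a b ha hb h
    have hBdd : BddAbove (hRatios (hexp p) (Icc (-r) 0) x0) :=
      ⟨D.toReal, fun c hc => hrat c hc⟩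
    have hx0Hol : MemHol r (hexp p) x0 := ⟨hx0C, hBdd⟩
    have hRatSup : sSup (hRatios (hexp p) (Icc (-r) 0) x0) ≤ D.toReal :=
      Real.sSup_le hrat ENNReal.toReal_nonneg
    set N := sobNorm r p x0 with hN
    have hNdecomp : N = supN r x0 + D.toReal := rfl
    set H0 := holderNorm r (hexp p) x0 with hH0
    have hH0N : H0 ≤ N := by
      apply max_le
      · rw [hNdecomp]
        linarith [ENNReal.toReal_nonneg (a := D), aux_supN_nonneg r x0]
      · rw [hNdecomp]
        linarith [aux_supN_nonneg r x0, hRatSup]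
    have hH0nn : 0 ≤ H0 := le_trans (aux_supN_nonneg r x0) (le_max_left _ _)
    have hNnn : 0 ≤ N := hH0nn.trans hH0N
    -- uniform bounds on the solution
    have hsb : ∀ u, 0 ≤ u → supN r (seg r x u) ≤ σ H0 u := fun u hu =>
      le_trans (le_max_left _ _) (hUG x0 x hx0Hol hsol u hu)
    set M := σ H0 0 with hM
    have hMnn : 0 ≤ M := hσ0 _ _ hH0nn le_rfl
    have hσantH0 := (hσt H0 hH0nn).1
    have hsbM : ∀ u, 0 ≤ u → supN r (seg r x u) ≤ M := fun u hu =>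
      (hsb u hu).trans (hσantH0 self_mem_Ici hu hu)
    have hgb : ∀ u, 0 ≤ u → ‖f (seg r x u)‖ ≤ L M * σ H0 u := by
      intro u hu
      have h1 := hLip M (seg r x u) 0 (aux_seg_memC0 hx hu) continuousOn_const (hsbM u hu)
        (by rw [aux_supN_zero hr]; exact hMnn)
      rw [hf0, sub_zero, sub_zero] at h1
      exact h1.trans (mul_le_mul_of_nonneg_left (hsb u hu) (hL0 M))
    have hxderiv := aux_sol_deriv hr hf hsol
    -- derivative of the segment
    have hds2 : ∀ s, -t < s → s < 0 → deriv (seg r x t) s = f (seg r x (t + s)) := by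
      intro s hs1 hs2
      have h2 : deriv (seg r x t) s = deriv x (t + s) := deriv_comp_const_add x t s
      rw [h2, (hxderiv (t + s) (by linarith)).deriv]
    have hds1 : ∀ s ∈ Ioo (-r) (-t), deriv (seg r x t) s = deriv x0 (t + s) := by
      intro s hs
      have hmem : t + s ∈ Ioo (-r) (0:ℝ) := ⟨by linarith [hs.1], by linarith [hs.2]⟩
      have hnb : (fun s' : ℝ => t + s') ⁻¹' (Ioo (-r) (0:ℝ)) ∈ 𝓝 s := by
        apply (continuous_const.add continuous_id).continuousAt.preimage_mem_nhds
        exact isOpen_Ioo.mem_nhds hmem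
      have hev : (seg r x t) =ᶠ[𝓝 s] (fun s' => x0 (t + s')) := by
        filter_upwards [hnb] with w hw
        exact heqx0 (Ioo_subset_Icc_self hw)
      rw [hev.deriv_eq, deriv_comp_const_add x0 t s]
    have hsm : StronglyMeasurable (deriv (seg r x t)) := stronglyMeasurable_deriv _
    have hsmx0 : StronglyMeasurable (deriv x0) := stronglyMeasurable_deriv _
    set t₀ := max 0 (t - r) with ht₀def
    have ht₀0 : (0:ℝ) ≤ t₀ := le_max_left _ _
    set C : ℝ := L M * σ H0 t₀ with hCdef
    have hC0 : 0 ≤ C := mul_nonneg (hL0 M) (hσ0 _ _ hH0nn ht₀0)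
    -- region-2 bound
    have hregion2 : eLpNorm (deriv (seg r x t)) p (volume.restrict (Ioo (-(min t r)) 0)) ≤
        ENNReal.ofReal κ * ENNReal.ofReal C := by
      have hbound : ∀ᵐ s ∂(volume.restrict (Ioo (-(min t r)) (0:ℝ))),
          ‖deriv (seg r x t) s‖ ≤ C := by
        filter_upwards [ae_restrict_mem measurableSet_Ioo] with s hs
        have hmin1 : min t r ≤ t := min_le_left _ _
        have hmin2 : min t r ≤ r := min_le_right _ _
        have hs1 : -t < s := by linarith [hs.1]
        have hts0 : 0 ≤ t + s := by linarith
        have hts1 : t₀ ≤ t + s := by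
          apply max_le hts0
          linarith [hs.1]
        rw [hds2 s hs1 hs.2, hCdef]
        refine (hgb (t + s) hts0).trans (mul_le_mul_of_nonneg_left ?_ (hL0 M))
        exact hσantH0 ht₀0 hts0 hts1
      have h := eLpNorm_le_of_ae_bound (p := p) hbound
      have hμ : (volume.restrict (Ioo (-(min t r)) (0:ℝ))) Set.univ ≤ ENNReal.ofReal κ := by
        rw [Measure.restrict_apply_univ, Real.volume_Ioo]
        apply ENNReal.ofReal_le_ofReal
        have : min t r ≤ r := min_le_right _ _
        linarith
      have hκ1' : (1:ℝ≥0∞) ≤ ENNReal.ofReal κ := by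
        rw [← ENNReal.ofReal_one]
        exact ENNReal.ofReal_le_ofReal hκ1
      have hpow : (volume.restrict (Ioo (-(min t r)) (0:ℝ))) Set.univ ^ p.toReal⁻¹ ≤
          ENNReal.ofReal κ := by
        calc (volume.restrict (Ioo (-(min t r)) (0:ℝ))) Set.univ ^ p.toReal⁻¹
            ≤ (ENNReal.ofReal κ) ^ p.toReal⁻¹ := ENNReal.rpow_le_rpow hμ he0
          _ ≤ (ENNReal.ofReal κ) ^ (1:ℝ) := ENNReal.rpow_le_rpow_of_exponent_le hκ1' he1
          _ = ENNReal.ofReal κ := ENNReal.rpow_one _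
      exact h.trans (by gcongr)
    -- scalar comparison facts
    have hσm_t : σ H0 t ≤ σ N t := ((hσs t ht).2.1).monotoneOn hH0nn hNnn hH0N
    have hσm_t₀ : σ H0 t₀ ≤ σ N t₀ := ((hσs t₀ ht₀0).2.1).monotoneOn hH0nn hNnn hH0N
    have hσm_0 : σ H0 0 ≤ σ N 0 := ((hσs 0 le_rfl).2.1).monotoneOn hH0nn hNnn hH0N
    have hLM_AN : L M ≤ A N := by
      calc L M ≤ L (σ N 0) := hLmono hσm_0
        _ ≤ auxL1 L (σ N 0) := auxL1_ge hLmono _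
        _ ≤ A N := le_add_of_nonneg_right zero_le_one
    have hterm2 : κ * C ≤ κ * (A N * σ N t₀) := by
      apply mul_le_mul_of_nonneg_left _ hκ0
      exact mul_le_mul hLM_AN hσm_t₀ (hσ0 _ _ hH0nn ht₀0) (hAnn N)
    have hsupNseg : supN r (seg r x t) ≤ σ N t := (hsb t ht).trans hσm_t
    have hsob : sobNorm r p (seg r x t) = supN r (seg r x t) +
        (eLpNorm (deriv (seg r x t)) p (volume.restrict (Ioo (-r) 0))).toReal := rfl
    rcases le_or_gt r t with hrt | htr
    · -- t ≥ r : whole interval is region 2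
      have hmin : min t r = r := min_eq_right hrt
      have hE : eLpNorm (deriv (seg r x t)) p (volume.restrict (Ioo (-r) 0)) ≤
          ENNReal.ofReal κ * ENNReal.ofReal C := by
        have := hregion2
        rwa [hmin] at this
      have hEfin : ENNReal.ofReal κ * ENNReal.ofReal C ≠ ⊤ :=
        ENNReal.mul_ne_top ENNReal.ofReal_ne_top ENNReal.ofReal_ne_top
      have hEt : (eLpNorm (deriv (seg r x t)) p (volume.restrict (Ioo (-r) 0))).toReal ≤
          κ * C := by
        have h1 := ENNReal.toReal_mono hEfin hE
        rwa [ENNReal.toReal_mul, ENNReal.toReal_ofReal hκ0, ENNReal.toReal_ofReal hC0] at h1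
      dsimp only
      rw [hsob, if_neg (not_lt.2 hrt), mul_zero, add_zero]
      have hNind : (0:ℝ) ≤ N * 0 := by simp
      linarith
    · -- t < r : split the interval
      have hmin : min t r = t := min_eq_left htr.le
      have hsplit := aux_eLpNorm_split hsm (a := -r) (b := -t) (c := 0)
        (by linarith) (by linarith) hp1
      have hE1eq : eLpNorm (deriv (seg r x t)) p (volume.restrict (Ioo (-r) (-t))) =
          eLpNorm (deriv x0) p (volume.restrict (Ioo (t - r) 0)) := by
        have hcongr : eLpNorm (deriv (seg r x t)) p (volume.restrict (Ioo (-r) (-t))) =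
            eLpNorm (fun s => deriv x0 (t + s)) p (volume.restrict (Ioo (-r) (-t))) := by
          apply eLpNorm_congr_ae
          filter_upwards [ae_restrict_mem measurableSet_Ioo] with s hs
          exact hds1 s hs
        rw [hcongr]
        have hmp : MeasurePreserving (fun s => t + s) (volume.restrict (Ioo (-r) (-t)))
            (volume.restrict (Ioo (t - r) 0)) := by
          have h := (measurePreserving_add_left (volume : Measure ℝ) t).restrict_preimage
            (measurableSet_Ioo (a := t - r) (b := 0))
          have hpre : (fun s : ℝ => t + s) ⁻¹' (Ioo (t - r) 0) = Ioo (-r) (-t) := by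
            ext w
            simp only [mem_preimage, mem_Ioo]
            constructor <;> intro hw <;> exact ⟨by linarith [hw.1, hw.2], by linarith [hw.1, hw.2]⟩
          rwa [hpre] at h
        have hcomp : (fun s => deriv x0 (t + s)) = (deriv x0) ∘ (fun s : ℝ => t + s) := rfl
        rw [hcomp]
        exact eLpNorm_comp_measurePreserving hsmx0.aestronglyMeasurable hmp
      have hE1le : eLpNorm (deriv x0) p (volume.restrict (Ioo (t - r) 0)) ≤ D := by
        rw [hDdef]
        exact eLpNorm_mono_measure _ (Measure.restrict_mono (Ioo_subset_Ioo (by linarith) le_rfl) le_rfl)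
      have hE2 : eLpNorm (deriv (seg r x t)) p (volume.restrict (Ioo (-t) 0)) ≤
          ENNReal.ofReal κ * ENNReal.ofReal C := by
        have := hregion2
        rwa [hmin] at this
      have hEfin : D + ENNReal.ofReal κ * ENNReal.ofReal C ≠ ⊤ :=
        ENNReal.add_ne_top.2 ⟨hDfin,
          ENNReal.mul_ne_top ENNReal.ofReal_ne_top ENNReal.ofReal_ne_top⟩
      have hE : eLpNorm (deriv (seg r x t)) p (volume.restrict (Ioo (-r) 0)) ≤
          D + ENNReal.ofReal κ * ENNReal.ofReal C := by
        refine hsplit.trans (add_le_add ?_ hE2)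
        rw [hE1eq]
        exact hE1le
      have hEt : (eLpNorm (deriv (seg r x t)) p (volume.restrict (Ioo (-r) 0))).toReal ≤
          D.toReal + κ * C := by
        have h1 := ENNReal.toReal_mono hEfin hE
        rwa [ENNReal.toReal_add hDfin (ENNReal.mul_ne_top ENNReal.ofReal_ne_top
          ENNReal.ofReal_ne_top), ENNReal.toReal_mul, ENNReal.toReal_ofReal hκ0,
          ENNReal.toReal_ofReal hC0] at h1
      have hDN : D.toReal ≤ N := by
        rw [hNdecomp]
        linarith [aux_supN_nonneg r x0]
      dsimp only
      rw [hsob, if_pos htr, mul_one]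
      linarith
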